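/- For any X ⪰ 0, the Riccati update with one-step observable pair satisfies a uniform bound: if C ∈ ℝ^{n×n} is invertible (so (A,C) is one-step observable) and R ≻ 0, Q ⪰ 0, then there exists a constant L > 0 independent of X such that g(X) ⪯ L·I for all positive semidefinite X, where g(X) = A X Aᵀ + Q − A X Cᵀ (C X Cᵀ + R)^{-1} C X Aᵀ. -/

import Mathlib

open Matrix

lemma psd_exists_smul_one_sub {n : ℕ} (B : Matrix (Fin n) (Fin n) ℝ)
    (hB : B.IsHermitian) :
    ∃ L : ℝ, 0 < L ∧ ((L • (1 : Matrix (Fin n) (Fin n) ℝ)) - B).PosSemidef := by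
  refine ⟨(∑ i, ∑ j, |B i j|) + 1, by positivity, ?_⟩
  set L : ℝ := (∑ i, ∑ j, |B i j|) + 1 with hLdef
  have hBt : Bᵀ = B := by
    have := hB.eq; rwa [conjTranspose_eq_transpose_of_trivial] at this
  rw [Matrix.posSemidef_iff_dotProduct_mulVec]
  constructor
  · simp [Matrix.IsHermitian, Matrix.conjTranspose_sub, Matrix.conjTranspose_smul,
      conjTranspose_eq_transpose_of_trivial, hBt]
  · intro x
    have hSnn : 0 ≤ x ⬝ᵥ x := by
      simp only [dotProduct]
      exact Finset.sum_nonneg fun i _ => mul_self_nonneg _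
    have hterm : ∀ i j : Fin n, x i * (B i j * x j) ≤ |B i j| * (x ⬝ᵥ x) := by
      intro i j
      have hxi : x i * x i ≤ x ⬝ᵥ x :=
        Finset.single_le_sum (f := fun k => x k * x k)
          (fun k _ => mul_self_nonneg _) (Finset.mem_univ i)
      have hxj : x j * x j ≤ x ⬝ᵥ x :=
        Finset.single_le_sum (f := fun k => x k * x k)
          (fun k _ => mul_self_nonneg _) (Finset.mem_univ j)
      have h1 : x i * (B i j * x j) ≤ |x i| * (|B i j| * |x j|) := by
        calc x i * (B i j * x j) ≤ |x i * (B i j * x j)| := le_abs_self _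
        _ = |x i| * (|B i j| * |x j|) := by rw [abs_mul, abs_mul]
      have h2 : |x i| * |x j| ≤ x ⬝ᵥ x := by
        nlinarith [abs_nonneg (x i), abs_nonneg (x j), sq_abs (x i), sq_abs (x j)]
      nlinarith [abs_nonneg (B i j), abs_nonneg (x i), abs_nonneg (x j)]
    have hquad : x ⬝ᵥ (B *ᵥ x) ≤ L * (x ⬝ᵥ x) := by
      have e : x ⬝ᵥ (B *ᵥ x) = ∑ i, ∑ j, x i * (B i j * x j) := by
        simp [dotProduct, mulVec, Finset.mul_sum]
      calc x ⬝ᵥ (B *ᵥ x) = ∑ i, ∑ j, x i * (B i j * x j) := e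
      _ ≤ ∑ i, ∑ j, |B i j| * (x ⬝ᵥ x) :=
        Finset.sum_le_sum fun i _ => Finset.sum_le_sum fun j _ => hterm i j
      _ = (∑ i, ∑ j, |B i j|) * (x ⬝ᵥ x) := by rw [Finset.sum_mul]; simp [Finset.sum_mul]
      _ ≤ L * (x ⬝ᵥ x) := by
        apply mul_le_mul_of_nonneg_right _ hSnn
        rw [hLdef]; linarith
    have : x ⬝ᵥ ((L • (1 : Matrix (Fin n) (Fin n) ℝ) - B) *ᵥ x)
        = L * (x ⬝ᵥ x) - x ⬝ᵥ (B *ᵥ x) := by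
      rw [Matrix.sub_mulVec, dotProduct_sub, Matrix.smul_mulVec, Matrix.one_mulVec,
        dotProduct_smul]
      simp [smul_eq_mul]
    simp only [star_trivial]
    rw [this]
    linarith

theorem riccati_uniform_bound_one_step_observable {n : ℕ}
    (A C Q R : Matrix (Fin n) (Fin n) ℝ) (hC : IsUnit C)
    (hQ : Q.PosSemidef) (hR : R.PosDef) :
    ∃ L : ℝ, 0 < L ∧ ∀ X : Matrix (Fin n) (Fin n) ℝ, X.PosSemidef →
      ((L • (1 : Matrix (Fin n) (Fin n) ℝ)) -
        (A * X * Aᵀ + Q - A * X * Cᵀ * (C * X * Cᵀ + R)⁻¹ * (C * X * Aᵀ))).PosSemidef := by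
  have hCdet : IsUnit C.det := (Matrix.isUnit_iff_isUnit_det C).mp hC
  set M : Matrix (Fin n) (Fin n) ℝ := A * C⁻¹ with hM
  have hAeq : M * C = A := Matrix.nonsing_inv_mul_cancel_right (A := C) A hCdet
  have hRsymm : Rᵀ = R := by
    have := hR.isHermitian
    rwa [Matrix.IsHermitian, conjTranspose_eq_transpose_of_trivial] at this
  have hBpsd : (M * R * Mᵀ + Q).PosSemidef := by
    have h1 := hR.posSemidef.mul_mul_conjTranspose_same M
    rw [conjTranspose_eq_transpose_of_trivial] at h1
    exact h1.add hQ
  obtain ⟨L, hL, hLB⟩ := psd_exists_smul_one_sub (M * R * Mᵀ + Q) hBpsd.isHermitian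
  refine ⟨L, hL, fun X hX => ?_⟩
  set S : Matrix (Fin n) (Fin n) ℝ := C * X * Cᵀ with hSdef
  have hS : S.PosSemidef := by
    have := hX.mul_mul_conjTranspose_same C
    rwa [conjTranspose_eq_transpose_of_trivial] at this
  set T : Matrix (Fin n) (Fin n) ℝ := S + R with hTdef
  have hTpd : T.PosDef := Matrix.PosDef.posSemidef_add hS hR
  have hTdet : IsUnit T.det := hTpd.det_pos.ne'.isUnit
  have h1 : T * T⁻¹ = 1 := Matrix.mul_nonsing_inv T hTdet
  have h2 : T⁻¹ * T = 1 := Matrix.nonsing_inv_mul T hTdet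
  have eA : A * X * Aᵀ = M * S * Mᵀ := by
    rw [← hAeq, hSdef]
    simp only [Matrix.transpose_mul, Matrix.mul_assoc]
  have eAC : A * X * Cᵀ = M * S := by
    rw [← hAeq, hSdef]
    simp only [Matrix.transpose_mul, Matrix.mul_assoc]
  have eCA : C * X * Aᵀ = S * Mᵀ := by
    rw [← hAeq, hSdef]
    simp only [Matrix.transpose_mul, Matrix.mul_assoc]
  have key : S - S * T⁻¹ * S = R - R * T⁻¹ * R := by
    have hSe : S = T - R := by rw [hTdef]; abel
    rw [hSe]
    calc (T - R) - (T - R) * T⁻¹ * (T - R)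
        = (T - R) - (T * T⁻¹ * T - T * T⁻¹ * R - R * (T⁻¹ * T) + R * T⁻¹ * R) := by
          noncomm_ring
      _ = R - R * T⁻¹ * R := by rw [h1, h2]; noncomm_ring
  have eq2 : A * X * Aᵀ + Q - A * X * Cᵀ * T⁻¹ * (C * X * Aᵀ)
      = (M * R * Mᵀ + Q) - M * R * T⁻¹ * (R * Mᵀ) := by
    rw [eA, eAC, eCA]
    have h3 : M * (S - S * T⁻¹ * S) * Mᵀ = M * R * Mᵀ - M * R * T⁻¹ * (R * Mᵀ) := by
      rw [key]; noncomm_ring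
    calc M * S * Mᵀ + Q - M * S * T⁻¹ * (S * Mᵀ)
        = M * (S - S * T⁻¹ * S) * Mᵀ + Q := by noncomm_ring
      _ = (M * R * Mᵀ - M * R * T⁻¹ * (R * Mᵀ)) + Q := by rw [h3]
      _ = (M * R * Mᵀ + Q) - M * R * T⁻¹ * (R * Mᵀ) := by noncomm_ring
  rw [eq2]
  have hP : ((M * R) * T⁻¹ * (M * R)ᵀ).PosSemidef := by
    have := hTpd.inv.posSemidef.mul_mul_conjTranspose_same (M * R)
    rwa [conjTranspose_eq_transpose_of_trivial] at this
  have e : (M * R)ᵀ = R * Mᵀ := by rw [Matrix.transpose_mul, hRsymm]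
  rw [e] at hP
  have hfinal : L • (1 : Matrix (Fin n) (Fin n) ℝ)
        - ((M * R * Mᵀ + Q) - M * R * T⁻¹ * (R * Mᵀ))
      = (L • (1 : Matrix (Fin n) (Fin n) ℝ) - (M * R * Mᵀ + Q))
        + (M * R) * T⁻¹ * (R * Mᵀ) := by abel
  rw [hfinal]
  exact hLB.add hP
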